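/- For every positive integer n and every nonnegative integer k, n^k equals the sum over all partitions λ of n of f^λ · m^λ_{(n)}(k), where f^λ is the number of standard Young tableaux of shape λ and m^λ_{(n)}(k) is the number of vacillating tableaux of length k from λ to the one-row partition (n). -/

import Mathlib

open YoungDiagram

/-- `ν` is obtained from `μ` by adding exactly one cell. -/
def AddCell (μ ν : YoungDiagram) : Prop := μ ≤ ν ∧ ν.card = μ.card + 1

/-- Vacillating tableaux of length `k` from `lam` to `mu`: sequences
`lam = λ⁰ ⊃ λ¹ ⊂ λ² ⊃ ⋯ ⊂ λ^{2k} = mu` with consecutive terms differing by one cell,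
encoded as functions `ℕ → YoungDiagram` that are constantly `mu` from index `2k` on. -/
def vacTabs (k : ℕ) (lam mu : YoungDiagram) : Set (ℕ → YoungDiagram) :=
  {f | f 0 = lam ∧ (∀ j, 2 * k ≤ j → f j = mu) ∧
    ∀ i < k, AddCell (f (2 * i + 1)) (f (2 * i)) ∧ AddCell (f (2 * i + 1)) (f (2 * i + 2))}

/-- `m^lam_mu(k)`: the number of vacillating tableaux of length `k` from `lam` to `mu`. -/
noncomputable def mVac (lam mu : YoungDiagram) (k : ℕ) : ℕ := (vacTabs k lam mu).ncard

/-- Standard Young tableaux of shape `lam`, as saturated chains `∅ = ν⁰ ⊂ ν¹ ⊂ ⋯ ⊂ νⁿ = lam`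
adding one cell at a time (encoded as functions constantly `lam` from index `lam.card` on). -/
def sytChains (lam : YoungDiagram) : Set (ℕ → YoungDiagram) :=
  {g | g 0 = ⊥ ∧ (∀ j, lam.card ≤ j → g j = lam) ∧
    ∀ i < lam.card, AddCell (g i) (g (i + 1))}

/-- `f^lam`: the number of standard Young tableaux of shape `lam`. -/
noncomputable def fSYT (lam : YoungDiagram) : ℕ := (sytChains lam).ncard

/-- The one-row partition `(n)`. -/
def rowD (n : ℕ) : YoungDiagram := ofRowLens [n] (List.sortedGE_iff_pairwise.mpr (List.pairwise_singleton _ n))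

/-- The one-column partition `(1ⁿ)`. -/
def colD (n : ℕ) : YoungDiagram :=
  ofRowLens (List.replicate n 1) (List.sortedGE_iff_pairwise.mpr (List.pairwise_replicate.mpr (Or.inr (le_refl 1))))

/-- The hook partition `(n-1,1)` (for `n ≥ 2`). -/
def hookD (n : ℕ) : YoungDiagram := rowD (n - 1) ⊔ colD 2

/-- Stirling numbers of the second kind: the number of set partitions of a
`k`-element set into exactly `l` nonempty blocks. -/
noncomputable def stirling (k l : ℕ) : ℕ :=
  {P : Finpartition (Finset.univ : Finset (Fin k)) | P.parts.card = l}.ncard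

/-- Bell numbers: the number of set partitions of a `k`-element set. -/
noncomputable def bell (k : ℕ) : ℕ :=
  Nat.card (Finpartition (Finset.univ : Finset (Fin k)))


namespace VacProof
open Finset

noncomputable instance : DecidableEq YoungDiagram := Classical.decEq _
noncomputable instance : DecidableEq (ℕ → YoungDiagram) := Classical.decEq _

lemma yd_eq_of_le_of_card_le {μ ν : YoungDiagram} (h : μ ≤ ν) (hc : ν.card ≤ μ.card) : μ = ν := by
  ext1
  exact (Finset.eq_of_subset_of_card_le (YoungDiagram.cells_subset_iff.mpr h) hc)

lemma yd_card_le_of_le {μ ν : YoungDiagram} (h : μ ≤ ν) : μ.card ≤ ν.card :=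
  Finset.card_le_card (YoungDiagram.cells_subset_iff.mpr h)

/-- Row `i` admits adding a cell at its end. -/
def Addable (μ : YoungDiagram) (i : ℕ) : Prop := i = 0 ∨ μ.rowLen i < μ.rowLen (i - 1)

/-- Row `i` admits removing its last cell. -/
def Removable (μ : YoungDiagram) (i : ℕ) : Prop := μ.rowLen (i + 1) < μ.rowLen i

instance (μ : YoungDiagram) (i : ℕ) : Decidable (Addable μ i) := by unfold Addable; infer_instance
instance (μ : YoungDiagram) (i : ℕ) : Decidable (Removable μ i) := by unfold Removable; infer_instance

lemma isLowerSet_insert {μ : YoungDiagram} {i : ℕ} (h : Addable μ i) :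
    IsLowerSet (↑(insert (i, μ.rowLen i) μ.cells) : Set (ℕ × ℕ)) := by
  intro a b hba ha
  simp only [Finset.coe_insert, Set.mem_insert_iff, Finset.mem_coe, YoungDiagram.mem_cells] at ha ⊢
  rcases ha with rfl | ha
  · rcases eq_or_ne b (i, μ.rowLen i) with rfl | hne
    · exact Or.inl rfl
    · right
      obtain ⟨b1, b2⟩ := b
      obtain ⟨h1, h2⟩ := Prod.mk_le_mk.mp hba
      rcases lt_or_eq_of_le h2 with h2 | h2
      · exact YoungDiagram.mem_iff_lt_rowLen.2 (h2.trans_le (μ.rowLen_anti _ _ h1))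
      · have hb1 : b1 < i := lt_of_le_of_ne h1 (by rintro rfl; exact hne (by simp [h2]))
        rcases h with rfl | h
        · omega
        · subst h2
          exact YoungDiagram.mem_iff_lt_rowLen.2 (lt_of_lt_of_le h (μ.rowLen_anti _ _ (by omega)))
  · exact Or.inr (μ.isLowerSet hba ha)

/-- Add a cell at the end of row `i`. -/
def addCellAt (μ : YoungDiagram) (i : ℕ) (h : Addable μ i) : YoungDiagram :=
  ⟨insert (i, μ.rowLen i) μ.cells, isLowerSet_insert h⟩

lemma corner_not_mem (μ : YoungDiagram) (i : ℕ) : (i, μ.rowLen i) ∉ μ := by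
  simp [YoungDiagram.mem_iff_lt_rowLen]

lemma addCellAt_cells {μ : YoungDiagram} {i : ℕ} (h : Addable μ i) :
    (addCellAt μ i h).cells = insert (i, μ.rowLen i) μ.cells := rfl

lemma addCell_addCellAt {μ : YoungDiagram} {i : ℕ} (h : Addable μ i) :
    AddCell μ (addCellAt μ i h) := by
  constructor
  · rw [← YoungDiagram.cells_subset_iff, addCellAt_cells]
    exact Finset.subset_insert _ _
  · show (insert (i, μ.rowLen i) μ.cells).card = _
    rw [Finset.card_insert_of_notMem (by simpa using corner_not_mem μ i)]

lemma rowLen_eq_of_forall {μ : YoungDiagram} {i m : ℕ} (h : ∀ j, (i, j) ∈ μ ↔ j < m) :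
    μ.rowLen i = m := by
  rcases lt_trichotomy (μ.rowLen i) m with hlt | he | hgt
  · have := (h (μ.rowLen i)).mpr hlt
    rw [YoungDiagram.mem_iff_lt_rowLen] at this; omega
  · exact he
  · have := (h m).mp (YoungDiagram.mem_iff_lt_rowLen.mpr hgt)
    omega

lemma rowLen_addCellAt_self {μ : YoungDiagram} {i : ℕ} (h : Addable μ i) :
    (addCellAt μ i h).rowLen i = μ.rowLen i + 1 := by
  apply rowLen_eq_of_forall
  intro j
  show (i, j) ∈ insert (i, μ.rowLen i) μ.cells ↔ _
  simp only [Finset.mem_insert, Prod.mk.injEq, true_and, YoungDiagram.mem_cells,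
    YoungDiagram.mem_iff_lt_rowLen]
  omega

lemma rowLen_addCellAt_ne {μ : YoungDiagram} {i : ℕ} (h : Addable μ i) {i' : ℕ} (hne : i' ≠ i) :
    (addCellAt μ i h).rowLen i' = μ.rowLen i' := by
  apply rowLen_eq_of_forall
  intro j
  show (i', j) ∈ insert (i, μ.rowLen i) μ.cells ↔ _
  simp only [Finset.mem_insert, Prod.mk.injEq, YoungDiagram.mem_cells,
    YoungDiagram.mem_iff_lt_rowLen]
  constructor
  · rintro (⟨rfl, rfl⟩ | hm)
    · exact absurd rfl hne
    · exact hm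
  · exact fun hm => Or.inr hm

/-- Classification of one-cell additions. -/
lemma addCell_iff {μ ν : YoungDiagram} :
    AddCell μ ν ↔ ∃ i, ∃ h : Addable μ i, ν = addCellAt μ i h := by
  constructor
  · rintro ⟨hle, hcard⟩
    have hsub : μ.cells ⊆ ν.cells := YoungDiagram.cells_subset_iff.mpr hle
    have hd : (ν.cells \ μ.cells).card = 1 := by
      rw [Finset.card_sdiff_of_subset hsub]
      show ν.card - μ.card = 1
      omega
    obtain ⟨c, hc⟩ := Finset.card_eq_one.mp hd
    have hcin : c ∈ ν.cells ∧ c ∉ μ.cells := by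
      have : c ∈ ν.cells \ μ.cells := hc ▸ Finset.mem_singleton_self c
      exact Finset.mem_sdiff.mp this
    have hcells : ν.cells = insert c μ.cells := by
      apply Finset.Subset.antisymm
      · intro x hx
        by_cases hxμ : x ∈ μ.cells
        · exact Finset.mem_insert_of_mem hxμ
        · have : x ∈ ν.cells \ μ.cells := Finset.mem_sdiff.mpr ⟨hx, hxμ⟩
          rw [hc, Finset.mem_singleton] at this
          exact this ▸ Finset.mem_insert_self _ _
      · intro x hx
        rcases Finset.mem_insert.mp hx with rfl | hx
        · exact hcin.1
        · exact hsub hx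
    obtain ⟨i, j⟩ := c
    have hj : j = μ.rowLen i := by
      have hle' : μ.rowLen i ≤ j := by
        by_contra hlt
        exact hcin.2 (YoungDiagram.mem_iff_lt_rowLen.mpr (by omega))
      have hge : j ≤ μ.rowLen i := by
        by_contra hgt
        -- then (i, rowLen) ∈ ν, ≠ c, so ∈ μ, contradiction with corner_not_mem
        have hmem : (i, μ.rowLen i) ∈ ν := ν.up_left_mem le_rfl (by omega) hcin.1
        have : (i, μ.rowLen i) ∈ μ.cells := by
          have := hcells ▸ (YoungDiagram.mem_cells _).mpr hmem
          rcases Finset.mem_insert.mp this with he | h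
          · exfalso; have := (Prod.mk.injEq ..).mp he; omega
          · exact h
        exact corner_not_mem μ i this
      omega
    subst hj
    have hadd : Addable μ i := by
      rcases Nat.eq_zero_or_pos i with rfl | hi
      · exact Or.inl rfl
      · right
        have hmem : (i - 1, μ.rowLen i) ∈ ν := ν.up_left_mem (by omega) le_rfl hcin.1
        have : (i - 1, μ.rowLen i) ∈ μ.cells := by
          have := hcells ▸ (YoungDiagram.mem_cells _).mpr hmem
          rcases Finset.mem_insert.mp this with he | h
          · exfalso; have := (Prod.mk.injEq ..).mp he; omega
          · exact h
        exact YoungDiagram.mem_iff_lt_rowLen.mp this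
    exact ⟨i, hadd, by ext1; exact hcells⟩
  · rintro ⟨i, h, rfl⟩
    exact addCell_addCellAt h


-- ### Removal

lemma rowLen_pos_of_removable {μ : YoungDiagram} {i : ℕ} (h : Removable μ i) : 0 < μ.rowLen i :=
  Nat.pos_of_ne_zero (fun h0 => by unfold Removable at h; omega)

lemma last_cell_mem {μ : YoungDiagram} {i : ℕ} (h : Removable μ i) : (i, μ.rowLen i - 1) ∈ μ :=
  YoungDiagram.mem_iff_lt_rowLen.mpr (by have := rowLen_pos_of_removable h; omega)

lemma isLowerSet_erase {μ : YoungDiagram} {i : ℕ} (h : Removable μ i) :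
    IsLowerSet (↑(μ.cells.erase (i, μ.rowLen i - 1)) : Set (ℕ × ℕ)) := by
  have hpos := rowLen_pos_of_removable h
  rintro ⟨a1, a2⟩ ⟨b1, b2⟩ hba ha
  simp only [Finset.coe_erase, Set.mem_diff, Finset.mem_coe, YoungDiagram.mem_cells,
    Set.mem_singleton_iff] at ha ⊢
  obtain ⟨ha, hane⟩ := ha
  obtain ⟨h1, h2⟩ := Prod.mk_le_mk.mp hba
  refine ⟨μ.isLowerSet hba ha, ?_⟩
  intro hbe
  rw [Prod.mk.injEq] at hbe
  obtain ⟨rfl, rfl⟩ := hbe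
  have ha2 : a2 < μ.rowLen a1 := YoungDiagram.mem_iff_lt_rowLen.mp ha
  have hra : μ.rowLen a1 ≤ μ.rowLen b1 := μ.rowLen_anti _ _ h1
  have ha1 : b1 < a1 := by
    by_contra hh
    have h1' : a1 = b1 := by omega
    subst h1'
    exact hane (by rw [Prod.mk.injEq]; exact ⟨rfl, by omega⟩)
  have h3 : μ.rowLen a1 ≤ μ.rowLen (b1 + 1) := μ.rowLen_anti _ _ (by omega)
  unfold Removable at h
  omega

def removeCellAt (μ : YoungDiagram) (i : ℕ) (h : Removable μ i) : YoungDiagram :=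
  ⟨μ.cells.erase (i, μ.rowLen i - 1), isLowerSet_erase h⟩

lemma removeCellAt_cells {μ : YoungDiagram} {i : ℕ} (h : Removable μ i) :
    (removeCellAt μ i h).cells = μ.cells.erase (i, μ.rowLen i - 1) := rfl

lemma addCell_removeCellAt {μ : YoungDiagram} {i : ℕ} (h : Removable μ i) :
    AddCell (removeCellAt μ i h) μ := by
  constructor
  · rw [← YoungDiagram.cells_subset_iff, removeCellAt_cells]
    exact Finset.erase_subset _ _
  · show μ.cells.card = (μ.cells.erase (i, μ.rowLen i - 1)).card + 1
    rw [Finset.card_erase_of_mem (by simpa using last_cell_mem h)]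
    have : 0 < μ.cells.card := Finset.card_pos.mpr ⟨_, by simpa using last_cell_mem h⟩
    omega

/-- Classification of one-cell removals. -/
lemma addCell_iff' {ρ μ : YoungDiagram} :
    AddCell ρ μ ↔ ∃ i, ∃ h : Removable μ i, ρ = removeCellAt μ i h := by
  constructor
  · intro hA
    obtain ⟨i, h, rfl⟩ := addCell_iff.mp hA
    have hself := rowLen_addCellAt_self h
    have hne := rowLen_addCellAt_ne h (i' := i + 1) (by omega)
    have hrem : Removable (addCellAt ρ i h) i := by
      unfold Removable
      rw [hself, hne]
      exact lt_of_le_of_lt (ρ.rowLen_anti i (i+1) (by omega)) (by omega)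
    refine ⟨i, hrem, ?_⟩
    ext1
    rw [removeCellAt_cells, addCellAt_cells, hself]
    simp only [Nat.add_sub_cancel]
    rw [Finset.erase_insert (by simpa using corner_not_mem ρ i)]
  · rintro ⟨i, h, rfl⟩
    exact addCell_removeCellAt h

-- ### Finiteness of partitions with given size

lemma partsFinite (n : ℕ) : {μ : YoungDiagram | μ.card = n}.Finite := by
  apply Set.Finite.of_finite_image (f := YoungDiagram.cells)
  · apply Set.Finite.subset (Finset.finite_toSet ((Finset.range n ×ˢ Finset.range n).powerset))
    rintro _ ⟨μ, hμ, rfl⟩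
    simp only [Finset.coe_powerset, Set.mem_preimage, Set.mem_powerset_iff, Finset.coe_subset]
    intro c hc
    obtain ⟨i, j⟩ := c
    have hc' : (i, j) ∈ μ := hc
    have hi : i < μ.colLen j := YoungDiagram.mem_iff_lt_colLen.mp hc'
    have hj : j < μ.rowLen i := YoungDiagram.mem_iff_lt_rowLen.mp hc'
    have h1 : μ.colLen j ≤ μ.card := by
      rw [YoungDiagram.colLen_eq_card]
      exact Finset.card_le_card (Finset.filter_subset _ _)
    have h2 : μ.rowLen i ≤ μ.card := by
      rw [YoungDiagram.rowLen_eq_card]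
      exact Finset.card_le_card (Finset.filter_subset _ _)
    simp only [Finset.mem_product, Finset.mem_range]
    have hμ' : μ.card = n := hμ
    exact ⟨by omega, by omega⟩
  · intro a _ b _ h
    exact YoungDiagram.ext h

lemma upsFinite (μ : YoungDiagram) : {ν | AddCell μ ν}.Finite :=
  Set.Finite.subset (partsFinite (μ.card + 1)) (fun ν hν => hν.2)

lemma downsFinite (μ : YoungDiagram) : {ρ | AddCell ρ μ}.Finite :=
  Set.Finite.subset (partsFinite (μ.card - 1)) (fun ρ hρ => by
    have := hρ.2; simp only [Set.mem_setOf_eq]; omega)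

noncomputable def parts (n : ℕ) : Finset YoungDiagram := (partsFinite n).toFinset
noncomputable def ups (μ : YoungDiagram) : Finset YoungDiagram := (upsFinite μ).toFinset
noncomputable def downs (μ : YoungDiagram) : Finset YoungDiagram := (downsFinite μ).toFinset

@[simp] lemma mem_parts {n : ℕ} {μ : YoungDiagram} : μ ∈ parts n ↔ μ.card = n :=
  Set.Finite.mem_toFinset _
@[simp] lemma mem_ups {μ ν : YoungDiagram} : ν ∈ ups μ ↔ AddCell μ ν :=
  Set.Finite.mem_toFinset _
@[simp] lemma mem_downs {μ ρ : YoungDiagram} : ρ ∈ downs μ ↔ AddCell ρ μ :=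
  Set.Finite.mem_toFinset _

-- ### Addable/removable row index Finsets

lemma addable_lt {μ : YoungDiagram} {i : ℕ} (h : Addable μ i) : i < μ.colLen 0 + 2 := by
  rcases h with rfl | h
  · omega
  · have : 0 < μ.rowLen (i - 1) := by omega
    have : (i - 1, 0) ∈ μ := YoungDiagram.mem_iff_lt_rowLen.mpr this
    have := YoungDiagram.mem_iff_lt_colLen.mp this
    omega

lemma removable_lt {μ : YoungDiagram} {i : ℕ} (h : Removable μ i) : i < μ.colLen 0 + 2 := by
  have : (i, 0) ∈ μ := YoungDiagram.mem_iff_lt_rowLen.mpr (rowLen_pos_of_removable h)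
  have := YoungDiagram.mem_iff_lt_colLen.mp this
  omega

noncomputable def AF (μ : YoungDiagram) : Finset ℕ :=
  (Finset.range (μ.colLen 0 + 2)).filter (fun i => Addable μ i)
noncomputable def RF (μ : YoungDiagram) : Finset ℕ :=
  (Finset.range (μ.colLen 0 + 2)).filter (fun i => Removable μ i)

@[simp] lemma mem_AF {μ : YoungDiagram} {i : ℕ} : i ∈ AF μ ↔ Addable μ i := by
  simp only [AF, Finset.mem_filter, Finset.mem_range]
  exact ⟨fun h => h.2, fun h => ⟨addable_lt h, h⟩⟩

@[simp] lemma mem_RF {μ : YoungDiagram} {i : ℕ} : i ∈ RF μ ↔ Removable μ i := by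
  simp only [RF, Finset.mem_filter, Finset.mem_range]
  exact ⟨fun h => h.2, fun h => ⟨removable_lt h, h⟩⟩

lemma AF_eq (μ : YoungDiagram) : AF μ = insert 0 ((RF μ).image (· + 1)) := by
  ext i
  simp only [mem_AF, Finset.mem_insert, Finset.mem_image, mem_RF]
  constructor
  · rintro (rfl | h)
    · exact Or.inl rfl
    · rcases Nat.eq_zero_or_pos i with rfl | hi
      · exact Or.inl rfl
      · right
        exact ⟨i - 1, by unfold Removable; rcases i with _ | i' <;> simp_all, by omega⟩
  · rintro (rfl | ⟨j, hj, rfl⟩)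
    · exact Or.inl rfl
    · right
      unfold Removable at hj
      simpa using hj
  
lemma card_AF (μ : YoungDiagram) : (AF μ).card = (RF μ).card + 1 := by
  rw [AF_eq, Finset.card_insert_of_notMem (by simp), Finset.card_image_of_injective _
    (add_left_injective 1)]

-- ### ups/downs as images

noncomputable def addCell' (μ : YoungDiagram) (i : ℕ) : YoungDiagram :=
  if h : Addable μ i then addCellAt μ i h else ⊥
noncomputable def removeCell' (μ : YoungDiagram) (i : ℕ) : YoungDiagram :=
  if h : Removable μ i then removeCellAt μ i h else ⊥

lemma ups_eq (μ : YoungDiagram) : ups μ = (AF μ).image (addCell' μ) := by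
  ext ν
  simp only [mem_ups, Finset.mem_image, mem_AF]
  rw [addCell_iff]
  constructor
  · rintro ⟨i, h, rfl⟩
    exact ⟨i, h, by rw [addCell', dif_pos h]⟩
  · rintro ⟨i, h, rfl⟩
    exact ⟨i, h, by rw [addCell', dif_pos h]⟩

lemma downs_eq (μ : YoungDiagram) : downs μ = (RF μ).image (removeCell' μ) := by
  ext ρ
  simp only [mem_downs, Finset.mem_image, mem_RF]
  rw [addCell_iff']
  constructor
  · rintro ⟨i, h, rfl⟩
    exact ⟨i, h, by rw [removeCell', dif_pos h]⟩
  · rintro ⟨i, h, rfl⟩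
    exact ⟨i, h, by rw [removeCell', dif_pos h]⟩

lemma card_ups_eq_card_downs_add_one (μ : YoungDiagram) :
    (ups μ).card = (downs μ).card + 1 := by
  rw [ups_eq, downs_eq, Finset.card_image_of_injOn, Finset.card_image_of_injOn, card_AF]
  · -- injective on RF
    intro i hi i' hi' he
    simp only [Finset.mem_coe, mem_RF] at hi hi'
    rw [removeCell', removeCell', dif_pos hi, dif_pos hi'] at he
    by_contra hne
    have hc : (i, μ.rowLen i - 1) ∈ μ.cells := by simpa using last_cell_mem hi
    have hthis : (i, μ.rowLen i - 1) ∈ (removeCellAt μ i' hi').cells := by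
      rw [removeCellAt_cells]
      refine Finset.mem_erase.mpr ⟨?_, hc⟩
      simp only [ne_eq, Prod.mk.injEq, not_and]
      intro h; exact absurd h hne
    rw [← he, removeCellAt_cells] at hthis
    exact absurd hthis (Finset.notMem_erase _ _)
  · -- injective on AF
    intro i hi i' hi' he
    simp only [Finset.mem_coe, mem_AF] at hi hi'
    rw [addCell', addCell', dif_pos hi, dif_pos hi'] at he
    by_contra hne
    have : (i, μ.rowLen i) ∈ (addCellAt μ i' hi').cells := by
      rw [← he, addCellAt_cells]; exact Finset.mem_insert_self _ _
    rw [addCellAt_cells] at this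
    rcases Finset.mem_insert.mp this with h | h
    · exact hne (congrArg Prod.fst h)
    · exact corner_not_mem μ i (by simpa using h)

-- ### Diamond lemmas

lemma sup_card (μ ρ : YoungDiagram) : (μ ⊔ ρ).card + (μ ⊓ ρ).card = μ.card + ρ.card := by
  show (μ ⊔ ρ).cells.card + (μ ⊓ ρ).cells.card = μ.cells.card + ρ.cells.card
  rw [YoungDiagram.cells_sup, YoungDiagram.cells_inf]
  exact Finset.card_union_add_card_inter _ _

lemma diamond_down {μ ρ ν : YoungDiagram} (h1 : AddCell μ ν) (h2 : AddCell ρ ν) (hne : ρ ≠ μ) :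
    AddCell (μ ⊓ ρ) μ ∧ AddCell (μ ⊓ ρ) ρ ∧ μ ⊔ ρ = ν := by
  have hc := sup_card μ ρ
  have e1 := h1.2
  have e2 := h2.2
  have hsup_le : μ ⊔ ρ ≤ ν := sup_le h1.1 h2.1
  have hρμ : ¬ ρ ≤ μ := fun hle => hne (yd_eq_of_le_of_card_le hle (by omega))
  have hcard_lt : μ.card < (μ ⊔ ρ).card := by
    have hle : μ.card ≤ (μ ⊔ ρ).card := yd_card_le_of_le le_sup_left
    rcases eq_or_lt_of_le hle with he | hlt
    · exfalso
      have : μ = μ ⊔ ρ := yd_eq_of_le_of_card_le le_sup_left (by omega)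
      exact hρμ (le_sup_right.trans_eq this.symm)
    · exact hlt
  have hsc : (μ ⊔ ρ).card ≤ ν.card := yd_card_le_of_le hsup_le
  have hsupν : μ ⊔ ρ = ν := yd_eq_of_le_of_card_le hsup_le (by omega)
  rw [hsupν] at hc
  exact ⟨⟨inf_le_left, by omega⟩, ⟨inf_le_right, by omega⟩, hsupν⟩

lemma diamond_up {σ μ ρ : YoungDiagram} (h1 : AddCell σ μ) (h2 : AddCell σ ρ) (hne : ρ ≠ μ) :
    AddCell μ (μ ⊔ ρ) ∧ AddCell ρ (μ ⊔ ρ) ∧ μ ⊓ ρ = σ := by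
  have hc := sup_card μ ρ
  have e1 := h1.2
  have e2 := h2.2
  have hσ_le : σ ≤ μ ⊓ ρ := le_inf h1.1 h2.1
  have hσc : σ.card ≤ (μ ⊓ ρ).card := yd_card_le_of_le hσ_le
  have hinf_lt : (μ ⊓ ρ).card < μ.card := by
    have hle : (μ ⊓ ρ).card ≤ μ.card := yd_card_le_of_le inf_le_left
    rcases eq_or_lt_of_le hle with he | hlt
    · exfalso
      have hinfμ : μ ⊓ ρ = μ := yd_eq_of_le_of_card_le inf_le_left (by omega)
      have : μ ≤ ρ := hinfμ ▸ inf_le_right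
      exact hne (yd_eq_of_le_of_card_le this (by omega)).symm
    · exact hlt
  have hinfσ : σ = μ ⊓ ρ := yd_eq_of_le_of_card_le hσ_le (by omega)
  rw [← hinfσ] at hc
  exact ⟨⟨le_sup_left, by omega⟩, ⟨le_sup_right, by omega⟩, hinfσ.symm⟩



lemma coe_parts (n : ℕ) : ↑(parts n) = {lam : YoungDiagram | lam.card = n} :=
  (partsFinite n).coe_toFinset

-- ### chain basics

lemma syt_step {lam : YoungDiagram} {g : ℕ → YoungDiagram} (hg : g ∈ sytChains lam) (j : ℕ) :
    g j ≤ g (j + 1) := by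
  obtain ⟨h0, hc, hs⟩ := hg
  rcases lt_or_ge j lam.card with hj | hj
  · exact (hs j hj).1
  · rw [hc j hj, hc (j + 1) (by omega)]

lemma syt_le {lam : YoungDiagram} {g : ℕ → YoungDiagram} (hg : g ∈ sytChains lam) (j : ℕ) :
    g j ≤ lam := by
  have key : ∀ m, g j ≤ g (j + m) := by
    intro m
    induction m with
    | zero => exact le_rfl
    | succ m ih => exact ih.trans (by rw [← Nat.add_assoc]; exact syt_step hg (j + m))
  have h := key lam.card
  rwa [hg.2.1 (j + lam.card) (by omega)] at h

lemma syt_card {lam : YoungDiagram} {g : ℕ → YoungDiagram} (hg : g ∈ sytChains lam) :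
    ∀ j, j ≤ lam.card → (g j).card = j := by
  intro j
  induction j with
  | zero =>
    intro _
    rw [hg.1]
    show (⊥ : YoungDiagram).cells.card = 0
    rw [YoungDiagram.cells_bot, Finset.card_empty]
  | succ j ih =>
    intro hj
    have h := (hg.2.2 j (by omega)).2
    rw [h, ih (by omega)]

lemma vac_even_card {k : ℕ} {lam mu : YoungDiagram} {f : ℕ → YoungDiagram}
    (hf : f ∈ vacTabs k lam mu) : ∀ i, i ≤ k → (f (2 * i)).card = lam.card := by
  obtain ⟨h0, hc, hs⟩ := hf
  intro i
  induction i with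
  | zero => intro _; rw [show 2 * 0 = 0 by rfl, h0]
  | succ i ih =>
    intro hi
    have e1 : (f (2 * i)).card = (f (2 * i + 1)).card + 1 := (hs i (by omega)).1.2
    have e2 : (f (2 * i + 2)).card = (f (2 * i + 1)).card + 1 := (hs i (by omega)).2.2
    have e3 : 2 * (i + 1) = 2 * i + 2 := by ring
    have e4 := ih (by omega)
    rw [e3, e2, ← e4, e1]

lemma vac_card_le {k : ℕ} {lam mu : YoungDiagram} {f : ℕ → YoungDiagram}
    (hf : f ∈ vacTabs k lam mu) (j : ℕ) : (f j).card ≤ max lam.card mu.card := by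
  rcases le_or_gt (2 * k) j with hj | hj
  · rw [hf.2.1 j hj]; exact le_max_right _ _
  · rcases Nat.even_or_odd j with ⟨i, hi⟩ | ⟨i, hi⟩
    · have h := vac_even_card hf i (by omega)
      have e : 2 * i = j := by omega
      rw [← e, h]
      exact le_max_left _ _
    · have e1 : (f (2 * i)).card = (f (2 * i + 1)).card + 1 := ((hf.2.2) i (by omega)).1.2
      have e0 : (f (2 * i)).card = lam.card := vac_even_card hf i (by omega)
      have e : 2 * i + 1 = j := by omega
      rw [← e]
      have := le_max_left lam.card mu.card
      omega

-- ### finiteness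

lemma funset_finite {S : Set (ℕ → YoungDiagram)} (N B : ℕ)
    (hdet : ∀ f ∈ S, ∀ g ∈ S, (∀ j, j ≤ N → f j = g j) → f = g)
    (hbd : ∀ f ∈ S, ∀ j, (f j).card ≤ B) : S.Finite := by
  apply Set.Finite.of_finite_image (f := fun f (j : Fin (N + 1)) => f j.val)
  · apply Set.Finite.subset
      (s := Set.univ.pi (fun _ : Fin (N + 1) => {μ : YoungDiagram | μ.card ≤ B}))
    · apply Set.Finite.pi
      intro _
      apply Set.Finite.subset (Set.Finite.biUnion (Set.finite_Iic B) (fun m _ => partsFinite m))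
      intro μ hμ
      exact Set.mem_biUnion (Set.mem_Iic.mpr hμ) rfl
    · rintro _ ⟨f, hf, rfl⟩
      intro j _
      exact hbd f hf j.val
  · intro f hf g hg h
    exact hdet f hf g hg (fun j hj => congrFun h ⟨j, by omega⟩)

lemma sytChains_finite (lam : YoungDiagram) : (sytChains lam).Finite := by
  apply funset_finite lam.card lam.card
  · intro f hf g hg h
    funext j
    rcases le_or_gt j lam.card with hj | hj
    · exact h j hj
    · rw [hf.2.1 j (by omega), hg.2.1 j (by omega)]
  · intro f hf j
    exact yd_card_le_of_le (syt_le hf j)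

lemma vacTabs_finite (k : ℕ) (lam mu : YoungDiagram) : (vacTabs k lam mu).Finite := by
  apply funset_finite (2 * k) (max lam.card mu.card)
  · intro f hf g hg h
    funext j
    rcases le_or_gt j (2 * k) with hj | hj
    · exact h j hj
    · rw [hf.2.1 j (by omega), hg.2.1 j (by omega)]
  · intro f hf j
    exact vac_card_le hf j

noncomputable def sytF (lam : YoungDiagram) : Finset (ℕ → YoungDiagram) :=
  (sytChains_finite lam).toFinset
noncomputable def vacF (k : ℕ) (lam mu : YoungDiagram) : Finset (ℕ → YoungDiagram) :=
  (vacTabs_finite k lam mu).toFinset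

@[simp] lemma mem_sytF {lam : YoungDiagram} {g} : g ∈ sytF lam ↔ g ∈ sytChains lam :=
  Set.Finite.mem_toFinset _
@[simp] lemma mem_vacF {k : ℕ} {lam mu : YoungDiagram} {f} :
    f ∈ vacF k lam mu ↔ f ∈ vacTabs k lam mu :=
  Set.Finite.mem_toFinset _

lemma fSYT_eq (lam : YoungDiagram) : fSYT lam = (sytF lam).card :=
  Set.ncard_eq_toFinset_card _ (sytChains_finite lam)

lemma mVac_eq (k : ℕ) (lam mu : YoungDiagram) : mVac lam mu k = (vacF k lam mu).card :=
  Set.ncard_eq_toFinset_card _ (vacTabs_finite k lam mu)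

-- ### mVac recursions

lemma mVac_zero (lam mu : YoungDiagram) : mVac lam mu 0 = if lam = mu then 1 else 0 := by
  unfold mVac
  split_ifs with h
  · subst h
    have hset : vacTabs 0 lam lam = {fun _ => lam} := by
      ext f
      constructor
      · rintro ⟨h0, hc, _⟩
        funext j
        exact hc j (by omega)
      · intro hf
        rw [Set.mem_singleton_iff] at hf
        subst hf
        exact ⟨rfl, fun j _ => rfl, fun i hi => absurd hi (by omega)⟩
    rw [hset, Set.ncard_singleton]
  · have hset : vacTabs 0 lam mu = ∅ := by
      ext f
      simp only [Set.mem_empty_iff_false, iff_false]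
      rintro ⟨h0, hc, _⟩
      exact h (by rw [← h0, hc 0 (by omega)])
    rw [hset, Set.ncard_empty]

/-- prepend two steps to a vacillating tableau -/
def ext2 (lam ρ : YoungDiagram) (g : ℕ → YoungDiagram) : ℕ → YoungDiagram :=
  fun j => if j = 0 then lam else if j = 1 then ρ else g (j - 2)

lemma ext2_inj (lam ρ : YoungDiagram) : Function.Injective (ext2 lam ρ) := by
  intro g g' h
  funext j
  have := congrFun h (j + 2)
  simpa [ext2] using this

lemma mVac_succ (k : ℕ) (lam mu : YoungDiagram) :
    mVac lam mu (k + 1) = ∑ ρ ∈ downs lam, ∑ ν ∈ ups ρ, mVac ν mu k := by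
  have key : vacF (k + 1) lam mu =
      ((downs lam).sigma (fun ρ => ups ρ)).biUnion
        (fun p => (vacF k p.2 mu).image (ext2 lam p.1)) := by
    ext f
    simp only [mem_vacF, Finset.mem_biUnion, Finset.mem_sigma, Finset.mem_image,
      mem_downs, mem_ups]
    constructor
    · intro hf
      obtain ⟨h0, hc, hs⟩ := hf
      have hA := hs 0 (by omega)
      rw [show 2 * 0 + 1 = 1 by rfl, show 2 * 0 = 0 by rfl, show 2 * 0 + 2 = 2 by rfl, h0] at hA
      refine ⟨⟨f 1, f 2⟩, ⟨hA.1, hA.2⟩, fun j => f (j + 2), ?_, ?_⟩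
      · refine ⟨rfl, fun j hj => hc (j + 2) (by omega), fun i hi => ?_⟩
        have hstep := hs (i + 1) (by omega)
        have e1 : 2 * (i + 1) + 1 = (2 * i + 1) + 2 := by ring
        have e2 : 2 * (i + 1) = (2 * i) + 2 := by ring
        have e3 : 2 * (i + 1) + 2 = (2 * i + 2) + 2 := by ring
        rw [e3, e1, e2] at hstep
        exact hstep
      · funext j
        by_cases hj0 : j = 0
        · subst hj0; simp [ext2, h0]
        · by_cases hj1 : j = 1
          · subst hj1; simp [ext2]
          · simp only [ext2, if_neg hj0, if_neg hj1]
            congr 1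
            omega
    · rintro ⟨⟨ρ, ν⟩, ⟨hρ, hν⟩, g, hg, rfl⟩
      obtain ⟨hg0, hgc, hgs⟩ := hg
      refine ⟨by simp [ext2], fun j hj => ?_, fun i hi => ?_⟩
      · simp only [ext2, if_neg (by omega : ¬ j = 0), if_neg (by omega : ¬ j = 1)]
        exact hgc (j - 2) (by omega)
      · rcases Nat.eq_zero_or_pos i with rfl | hipos
        · constructor
          · show AddCell (ext2 lam ρ g 1) (ext2 lam ρ g 0)
            simp only [ext2, if_pos rfl, if_neg (by omega : ¬ (1:ℕ) = 0)]
            exact hρ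
          · show AddCell (ext2 lam ρ g 1) (ext2 lam ρ g 2)
            simp only [ext2, if_neg (by omega : ¬ (1:ℕ) = 0), if_pos rfl,
              if_neg (by omega : ¬ (2:ℕ) = 0), if_neg (by omega : ¬ (2:ℕ) = 1)]
            rw [show (2:ℕ) - 2 = 0 by rfl, hg0]
            exact hν
        · have hstep := hgs (i - 1) (by omega)
          have e1 : 2 * (i - 1) + 1 = 2 * i + 1 - 2 := by omega
          have e2 : 2 * (i - 1) = 2 * i - 2 := by omega
          have e3 : 2 * (i - 1) + 2 = 2 * i + 2 - 2 := by omega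
          rw [e3, e1, e2] at hstep
          constructor
          · show AddCell (ext2 lam ρ g (2 * i + 1)) (ext2 lam ρ g (2 * i))
            simp only [ext2, if_neg (by omega : ¬ 2 * i + 1 = 0),
              if_neg (by omega : ¬ 2 * i + 1 = 1), if_neg (by omega : ¬ 2 * i = 0),
              if_neg (by omega : ¬ 2 * i = 1)]
            exact hstep.1
          · show AddCell (ext2 lam ρ g (2 * i + 1)) (ext2 lam ρ g (2 * i + 2))
            simp only [ext2, if_neg (by omega : ¬ 2 * i + 1 = 0),
              if_neg (by omega : ¬ 2 * i + 1 = 1), if_neg (by omega : ¬ 2 * i + 2 = 0),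
              if_neg (by omega : ¬ 2 * i + 2 = 1)]
            exact hstep.2
  rw [mVac_eq, key, Finset.card_biUnion, Finset.sum_sigma]
  · refine Finset.sum_congr rfl fun ρ _ => Finset.sum_congr rfl fun ν _ => ?_
    rw [Finset.card_image_of_injective _ (ext2_inj lam ρ), mVac_eq]
  · rintro ⟨ρ, ν⟩ hp ⟨ρ', ν'⟩ hq hne
    rw [Function.onFun, Finset.disjoint_left]
    rintro f hf hf'
    simp only [Finset.mem_image, mem_vacF] at hf hf'
    obtain ⟨g, hg, rfl⟩ := hf
    obtain ⟨g', hg', he⟩ := hf'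
    apply hne
    have h1 := congrFun he 1
    have h2 := congrFun he 2
    simp only [ext2, if_neg (by omega : ¬ (1:ℕ) = 0), if_pos rfl] at h1
    simp only [ext2, if_neg (by omega : ¬ (2:ℕ) = 0), if_neg (by omega : ¬ (2:ℕ) = 1)] at h2
    rw [show (2:ℕ) - 2 = 0 by rfl] at h2
    rw [hg'.1, hg.1] at h2
    -- h1 : ρ' = ρ, h2 : ν' = ν
    subst h1
    subst h2
    rfl


-- ### branching rule

/-- complete an SYT chain of a subdiagram to one of `lam` -/
def extC (n : ℕ) (lam : YoungDiagram) (g : ℕ → YoungDiagram) : ℕ → YoungDiagram :=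
  fun j => if j < n then g j else lam

lemma branching (lam : YoungDiagram) (h : 1 ≤ lam.card) :
    fSYT lam = ∑ ρ ∈ downs lam, fSYT ρ := by
  set n := lam.card with hn
  have key : sytF lam = (downs lam).biUnion (fun ρ => (sytF ρ).image (extC n lam)) := by
    ext g
    simp only [mem_sytF, Finset.mem_biUnion, Finset.mem_image, mem_downs]
    constructor
    · intro hg
      have hcards := syt_card hg
      obtain ⟨h0, hc, hs⟩ := hg
      have hstep : AddCell (g (n - 1)) lam := by
        have hh := hs (n - 1) (by omega)
        rwa [show n - 1 + 1 = n by omega, hc n le_rfl] at hh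
      have hρcard : (g (n - 1)).card = n - 1 := hcards (n - 1) (by omega)
      refine ⟨g (n - 1), hstep, fun j => g (min j (n - 1)), ?_, ?_⟩
      · refine ⟨?_, ?_, ?_⟩
        · show g (min 0 (n - 1)) = ⊥
          rw [Nat.min_eq_left (by omega)]
          exact h0
        · intro j hj
          rw [hρcard] at hj
          show g (min j (n - 1)) = g (n - 1)
          rw [min_eq_right hj]
        · intro i hi
          rw [hρcard] at hi
          have e1 : min i (n - 1) = i := min_eq_left (by omega)
          have e2 : min (i + 1) (n - 1) = i + 1 := min_eq_left (by omega)
          show AddCell (g (min i (n - 1))) (g (min (i + 1) (n - 1)))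
          rw [e1, e2]
          exact hs i (by omega)
      · funext j
        by_cases hj : j < n
        · simp only [extC, if_pos hj]
          rw [min_eq_left (by omega)]
        · simp only [extC, if_neg hj]
          exact (hc j (by omega)).symm
    · rintro ⟨ρ, hρ, g', hg', rfl⟩
      have hρcard : ρ.card = n - 1 := by have := hρ.2; omega
      have hg'c := hg'.2.1
      obtain ⟨h0, hc, hs⟩ := hg'
      refine ⟨?_, ?_, ?_⟩
      · show extC n lam g' 0 = ⊥
        simp only [extC, if_pos (by omega : 0 < n)]
        exact h0
      · intro j hj
        simp only [extC, if_neg (by omega : ¬ j < n)]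
      · intro i hi
        by_cases hi1 : i + 1 < n
        · show AddCell (extC n lam g' i) (extC n lam g' (i + 1))
          simp only [extC, if_pos (by omega : i < n), if_pos hi1]
          exact hs i (by omega)
        · have hieq : i = n - 1 := by omega
          show AddCell (extC n lam g' i) (extC n lam g' (i + 1))
          simp only [extC, if_pos (by omega : i < n), if_neg hi1]
          have : g' i = ρ := hc i (by omega)
          rw [this]
          exact hρ
  rw [fSYT_eq, key, Finset.card_biUnion]
  · refine Finset.sum_congr rfl fun ρ hρ => ?_
    rw [Finset.card_image_of_injOn, ← fSYT_eq]
    intro g hg g' hg' he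
    simp only [Finset.mem_coe, mem_sytF] at hg hg'
    have hρcard : ρ.card = n - 1 := by
      rw [mem_downs] at hρ
      have := hρ.2; omega
    funext j
    rcases lt_or_ge j n with hj | hj
    · have := congrFun he j
      simpa only [extC, if_pos hj] using this
    · rw [hg.2.1 j (by omega), hg'.2.1 j (by omega)]
  · rintro ρ hρ ρ' hρ' hne
    rw [Function.onFun, Finset.disjoint_left]
    rintro f hf hf'
    simp only [Finset.mem_image, mem_sytF] at hf hf'
    obtain ⟨g, hg, rfl⟩ := hf
    obtain ⟨g', hg', he⟩ := hf'
    apply hne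
    have hρc : ρ.card = n - 1 := by rw [Finset.mem_coe, mem_downs] at hρ; have := hρ.2; omega
    have hρ'c : ρ'.card = n - 1 := by rw [Finset.mem_coe, mem_downs] at hρ'; have := hρ'.2; omega
    have h1 := congrFun he (n - 1)
    simp only [extC, if_pos (by omega : n - 1 < n)] at h1
    rw [hg.2.1 (n - 1) (by omega), hg'.2.1 (n - 1) (by omega)] at h1
    exact h1.symm

-- ### the row diagram

lemma mem_rowD {n i j : ℕ} : (i, j) ∈ rowD n ↔ i = 0 ∧ j < n := by
  rw [rowD, YoungDiagram.mem_ofRowLens]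
  constructor
  · rintro ⟨h1, h2⟩
    simp only [List.length_singleton] at h1
    have hi : i = 0 := by omega
    subst hi
    exact ⟨rfl, by simpa using h2⟩
  · rintro ⟨rfl, hj⟩
    exact ⟨by simp, by simpa using hj⟩

lemma rowD_card (n : ℕ) : (rowD n).card = n := by
  show (rowD n).cells.card = n
  have hcells : (rowD n).cells = {0} ×ˢ Finset.range n := by
    ext c
    obtain ⟨i, j⟩ := c
    simp only [YoungDiagram.mem_cells, mem_rowD, Finset.mem_product, Finset.mem_singleton,
      Finset.mem_range]
  rw [hcells, Finset.card_product, Finset.card_singleton, Finset.card_range, one_mul]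

lemma rowD_zero : rowD 0 = ⊥ := by
  ext1
  rw [YoungDiagram.cells_bot]
  ext c
  obtain ⟨i, j⟩ := c
  simp only [YoungDiagram.mem_cells, mem_rowD, Finset.notMem_empty, iff_false]
  omega

lemma eq_rowD_of_le {μ : YoungDiagram} {n : ℕ} (h : μ ≤ rowD n) : μ = rowD μ.card := by
  have hfst : ∀ c : ℕ × ℕ, c ∈ μ → c.1 = 0 := fun c hc => (mem_rowD.mp (h hc)).1
  have hrow : μ.row 0 = μ.cells := by
    rw [YoungDiagram.row]
    refine Finset.filter_eq_self.mpr ?_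
    intro c hc
    exact hfst c hc
  have hlen : μ.rowLen 0 = μ.card := by rw [YoungDiagram.rowLen_eq_card, hrow]
  ext1
  ext c
  obtain ⟨i, j⟩ := c
  simp only [YoungDiagram.mem_cells, mem_rowD]
  constructor
  · intro hc
    have hi : i = 0 := hfst (i, j) hc
    refine ⟨hi, ?_⟩
    have hm := YoungDiagram.mem_iff_lt_rowLen.mp (show ((i : ℕ), j) ∈ μ from hc)
    rw [hi] at hm
    rw [← hlen]
    exact hm
  · rintro ⟨rfl, hj⟩
    exact YoungDiagram.mem_iff_lt_rowLen.mpr (by rw [hlen]; exact hj)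

lemma rowD_le_rowD {m n : ℕ} (h : m ≤ n) : rowD m ≤ rowD n := by
  rw [← YoungDiagram.cells_subset_iff]
  intro c hc
  obtain ⟨i, j⟩ := c
  simp only [YoungDiagram.mem_cells, mem_rowD] at hc ⊢
  omega

lemma fSYT_rowD (n : ℕ) : fSYT (rowD n) = 1 := by
  have hset : sytChains (rowD n) = {fun j => rowD (min j n)} := by
    ext g
    simp only [Set.mem_singleton_iff]
    constructor
    · intro hg
      funext j
      rcases le_or_gt n j with hj | hj
      · rw [min_eq_right hj]
        exact hg.2.1 j (by rw [rowD_card]; omega)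
      · have h1 : g j ≤ rowD n := syt_le hg j
        have h2 : (g j).card = j := syt_card hg j (by rw [rowD_card]; omega)
        rw [min_eq_left (by omega), eq_rowD_of_le h1, h2]
    · rintro rfl
      refine ⟨?_, ?_, ?_⟩
      · show rowD (min 0 n) = ⊥
        rw [Nat.min_eq_left (by omega)]
        exact rowD_zero
      · intro j hj
        rw [rowD_card] at hj
        show rowD (min j n) = rowD n
        rw [min_eq_right hj]
      · intro i hi
        rw [rowD_card] at hi
        show AddCell (rowD (min i n)) (rowD (min (i + 1) n))
        rw [min_eq_left (by omega), min_eq_left (by omega)]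
        exact ⟨rowD_le_rowD (by omega), by rw [rowD_card, rowD_card]⟩
  rw [fSYT, hset, Set.ncard_singleton]

-- ### key identity : ∑_{ν ⋗ μ} f^ν = (|μ|+1) f^μ

lemma sum_ups_fSYT : ∀ (m : ℕ) (μ : YoungDiagram), μ.card = m →
    ∑ ν ∈ ups μ, fSYT ν = (m + 1) * fSYT μ := by
  intro m
  induction m using Nat.strong_induction_on with
  | _ m ih =>
    intro μ hμ
    have h1 : ∀ ν ∈ ups μ, fSYT ν = fSYT μ + ∑ ρ ∈ (downs ν).erase μ, fSYT ρ := by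
      intro ν hν
      rw [mem_ups] at hν
      rw [branching ν (by have := hν.2; omega)]
      rw [← Finset.add_sum_erase _ _ (mem_downs.mpr hν)]
    have step1 : ∑ ν ∈ ups μ, fSYT ν
        = (ups μ).card * fSYT μ + ∑ ν ∈ ups μ, ∑ ρ ∈ (downs ν).erase μ, fSYT ρ := by
      rw [Finset.sum_congr rfl h1, Finset.sum_add_distrib, Finset.sum_const, smul_eq_mul]
    have hX : ∑ ν ∈ ups μ, ∑ ρ ∈ (downs ν).erase μ, fSYT ρ
        = ∑ σ ∈ downs μ, ∑ ρ ∈ (ups σ).erase μ, fSYT ρ := by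
      rw [← Finset.sum_sigma (ups μ) (fun ν => (downs ν).erase μ) (fun p => fSYT p.2),
        ← Finset.sum_sigma (downs μ) (fun σ => (ups σ).erase μ) (fun p => fSYT p.2)]
      refine Finset.sum_nbij' (fun p => ⟨μ ⊓ p.2, p.2⟩) (fun p => ⟨μ ⊔ p.2, p.2⟩) ?_ ?_ ?_ ?_ ?_
      · rintro ⟨ν, ρ⟩ hp
        simp only [Finset.mem_sigma, mem_ups, Finset.mem_erase, mem_downs] at hp ⊢
        obtain ⟨hν, hρne, hρ⟩ := hp
        obtain ⟨d1, d2, _⟩ := diamond_down hν hρ hρne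
        exact ⟨d1, hρne, d2⟩
      · rintro ⟨σ, ρ⟩ hp
        simp only [Finset.mem_sigma, mem_ups, Finset.mem_erase, mem_downs] at hp ⊢
        obtain ⟨hσ, hρne, hρ⟩ := hp
        obtain ⟨d1, d2, _⟩ := diamond_up hσ hρ hρne
        exact ⟨d1, hρne, d2⟩
      · rintro ⟨ν, ρ⟩ hp
        simp only [Finset.mem_sigma, mem_ups, Finset.mem_erase, mem_downs] at hp
        obtain ⟨hν, hρne, hρ⟩ := hp
        obtain ⟨_, _, h3⟩ := diamond_down hν hρ hρne
        show (⟨μ ⊔ ρ, ρ⟩ : Σ _ : YoungDiagram, YoungDiagram) = ⟨ν, ρ⟩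
        rw [h3]
      · rintro ⟨σ, ρ⟩ hp
        simp only [Finset.mem_sigma, mem_ups, Finset.mem_erase, mem_downs] at hp
        obtain ⟨hσ, hρne, hρ⟩ := hp
        obtain ⟨_, _, h3⟩ := diamond_up hσ hρ hρne
        show (⟨μ ⊓ ρ, ρ⟩ : Σ _ : YoungDiagram, YoungDiagram) = ⟨σ, ρ⟩
        rw [h3]
      · rintro ⟨ν, ρ⟩ _
        rfl
    set Y := ∑ σ ∈ downs μ, ∑ ρ ∈ (ups σ).erase μ, fSYT ρ with hYdef
    have hY : Y + (downs μ).card * fSYT μ = m * fSYT μ := by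
      have hterm : ∀ σ ∈ downs μ, (∑ ρ ∈ (ups σ).erase μ, fSYT ρ) + fSYT μ = m * fSYT σ := by
        intro σ hσ
        rw [mem_downs] at hσ
        have hσc : σ.card = m - 1 := by have := hσ.2; omega
        have hm1 : 1 ≤ m := by have := hσ.2; omega
        have hih := ih (m - 1) (by omega) σ hσc
        rw [add_comm, Finset.add_sum_erase _ _ (mem_ups.mpr hσ), hih]
        congr 1
        omega
      have e : ∑ σ ∈ downs μ, ((∑ ρ ∈ (ups σ).erase μ, fSYT ρ) + fSYT μ)
          = ∑ σ ∈ downs μ, m * fSYT σ := Finset.sum_congr rfl hterm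
      rw [Finset.sum_add_distrib, Finset.sum_const, smul_eq_mul] at e
      have e2 : Y + (downs μ).card * fSYT μ = ∑ σ ∈ downs μ, m * fSYT σ := e
      rw [e2, ← Finset.mul_sum]
      rcases Nat.eq_zero_or_pos m with rfl | hm
      · simp
      · rw [← branching μ (by omega)]
    rw [step1, hX, card_ups_eq_card_downs_add_one]
    have : ((downs μ).card + 1) * fSYT μ + Y
        = (Y + (downs μ).card * fSYT μ) + fSYT μ := by ring
    rw [this, hY]
    ring

-- ### up-down swap

lemma swapDU (n : ℕ) (hn : 1 ≤ n) (h : YoungDiagram → YoungDiagram → ℕ) :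
    ∑ lam ∈ parts n, ∑ ρ ∈ downs lam, h lam ρ
      = ∑ ρ ∈ parts (n - 1), ∑ lam ∈ ups ρ, h lam ρ := by
  rw [← Finset.sum_sigma (parts n) (fun lam => downs lam) (fun p => h p.1 p.2),
    ← Finset.sum_sigma (parts (n - 1)) (fun ρ => ups ρ) (fun p => h p.2 p.1)]
  refine Finset.sum_nbij' (fun p => ⟨p.2, p.1⟩) (fun p => ⟨p.2, p.1⟩) ?_ ?_ ?_ ?_ ?_
  · rintro ⟨lam, ρ⟩ hp
    simp only [Finset.mem_sigma, mem_parts, mem_downs, mem_ups] at hp ⊢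
    have := hp.2.2
    exact ⟨by omega, hp.2⟩
  · rintro ⟨ρ, lam⟩ hp
    simp only [Finset.mem_sigma, mem_parts, mem_downs, mem_ups] at hp ⊢
    have := hp.2.2
    exact ⟨by omega, hp.2⟩
  · rintro ⟨lam, ρ⟩ _; rfl
  · rintro ⟨ρ, lam⟩ _; rfl
  · rintro ⟨lam, ρ⟩ _; rfl


end VacProof

open VacProof

theorem stmt0 (n k : ℕ) (hn : 1 ≤ n) :
    (n : ℕ) ^ k =
      ∑ᶠ lam ∈ {lam : YoungDiagram | lam.card = n}, fSYT lam * mVac lam (rowD n) k := by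
  rw [← coe_parts n, finsum_mem_coe_finset]
  induction k with
  | zero =>
    rw [pow_zero]
    have hterm : ∀ lam ∈ parts n, fSYT lam * mVac lam (rowD n) 0
        = if lam = rowD n then fSYT lam else 0 := by
      intro lam _
      rw [mVac_zero]
      split_ifs <;> simp
    rw [Finset.sum_congr rfl hterm, Finset.sum_ite_eq' (parts n) (rowD n) fSYT,
      if_pos (mem_parts.mpr (rowD_card n)), fSYT_rowD]
  | succ k ih =>
    have key : ∑ lam ∈ parts n, fSYT lam * mVac lam (rowD n) (k + 1)
        = n * ∑ lam ∈ parts n, fSYT lam * mVac lam (rowD n) k := by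
      calc ∑ lam ∈ parts n, fSYT lam * mVac lam (rowD n) (k + 1)
          = ∑ lam ∈ parts n, ∑ ρ ∈ downs lam,
              fSYT lam * ∑ ν ∈ ups ρ, mVac ν (rowD n) k := by
            refine Finset.sum_congr rfl fun lam _ => ?_
            rw [mVac_succ, Finset.mul_sum]
        _ = ∑ ρ ∈ parts (n - 1), ∑ lam ∈ ups ρ,
              fSYT lam * ∑ ν ∈ ups ρ, mVac ν (rowD n) k :=
            swapDU n hn _
        _ = ∑ ρ ∈ parts (n - 1),
              (∑ lam ∈ ups ρ, fSYT lam) * (∑ ν ∈ ups ρ, mVac ν (rowD n) k) := by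
            refine Finset.sum_congr rfl fun ρ _ => ?_
            rw [Finset.sum_mul]
        _ = ∑ ρ ∈ parts (n - 1), n * (fSYT ρ * ∑ ν ∈ ups ρ, mVac ν (rowD n) k) := by
            refine Finset.sum_congr rfl fun ρ hρ => ?_
            rw [sum_ups_fSYT (n - 1) ρ (mem_parts.mp hρ), Nat.sub_add_cancel hn]
            ring
        _ = n * ∑ ρ ∈ parts (n - 1), ∑ ν ∈ ups ρ, fSYT ρ * mVac ν (rowD n) k := by
            rw [Finset.mul_sum]
            refine Finset.sum_congr rfl fun ρ _ => ?_
            rw [Finset.mul_sum, Finset.mul_sum]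
        _ = n * ∑ ν ∈ parts n, ∑ ρ ∈ downs ν, fSYT ρ * mVac ν (rowD n) k := by
            congr 1
            exact (swapDU n hn (fun ν ρ => fSYT ρ * mVac ν (rowD n) k)).symm
        _ = n * ∑ ν ∈ parts n, fSYT ν * mVac ν (rowD n) k := by
            congr 1
            refine Finset.sum_congr rfl fun ν hν => ?_
            rw [← Finset.sum_mul, ← branching ν (by rw [mem_parts.mp hν]; omega)]
    rw [key, ← ih, pow_succ]
    ring
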